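/- For all integers n ≥ 1 and 0 ≤ i ≤ n−1, the partial alternating sum ∑_{j=0}^{i} (−1)^{i−j} · C(n,j) · C(2n+1+j, n+1+j)/(2n+1+j) equals (1/(2n+1)) · C(n−1, i) · C(2n+1+i, n+1+i). -/

import Mathlib

open Finset

lemma step_3 (n i : ℕ) (hn : 1 ≤ n) (h : i + 1 ≤ n - 1) :
    (n.choose (i+1) : ℚ) * ((2*n+2+i).choose (n+2+i) : ℚ) / (2*n+2+i)
      - 1/(2*n+1) * ((n-1).choose i : ℚ) * ((2*n+1+i).choose (n+1+i) : ℚ)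
    = 1/(2*n+1) * ((n-1).choose (i+1) : ℚ) * ((2*n+2+i).choose (n+2+i) : ℚ) := by
  have hin : i + 2 ≤ n := by omega
  have r1 := Nat.add_one_mul_choose_eq (2*n+1+i) (n+1+i)
  have r2 := Nat.choose_succ_right_eq (n-1) i
  have r3 : n.choose (i+1) = (n-1).choose i + (n-1).choose (i+1) := by
    have := Nat.choose_succ_succ (n-1) i
    rw [← this]
    congr 1
    omega
  have e1 : ((2*n+2+i : ℚ)) * ((2*n+1+i).choose (n+1+i) : ℚ)
      = ((2*n+2+i).choose (n+2+i) : ℚ) * ((n+2+i : ℚ)) := by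
    have : (2*n+1+i) + 1 = 2*n+2+i := by omega
    rw [this] at r1
    have : (n+1+i) + 1 = n+2+i := by omega
    rw [this] at r1
    have h2 : (2*n+1+i).choose (n+1+i) = (2*n+1+i).choose ((n+1+i)) := rfl
    exact_mod_cast congrArg (Nat.cast : ℕ → ℚ) r1
  have e2 : ((n-1).choose (i+1) : ℚ) * ((i:ℚ)+1)
      = ((n-1).choose i : ℚ) * ((n:ℚ) - 1 - i) := by
    have hs : ((n - 1 - i : ℕ) : ℚ) = (n:ℚ) - 1 - i := by
      have h1 : i ≤ n - 1 := by omega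
      push_cast [Nat.cast_sub h1, Nat.cast_sub hn]
      ring
    calc ((n-1).choose (i+1) : ℚ) * ((i:ℚ)+1)
        = (((n-1).choose (i+1) * (i+1) : ℕ) : ℚ) := by push_cast; ring
      _ = (((n-1).choose i * (n-1-i) : ℕ) : ℚ) := by exact_mod_cast r2
      _ = ((n-1).choose i : ℚ) * ((n:ℚ) - 1 - i) := by push_cast [hs]; ring
  have e3 : (n.choose (i+1) : ℚ) = ((n-1).choose i : ℚ) + ((n-1).choose (i+1) : ℚ) := by
    exact_mod_cast congrArg (Nat.cast : ℕ → ℚ) r3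
  have hd1 : ((2:ℚ)*n+2+i) ≠ 0 := by positivity
  have hd2 : ((2:ℚ)*n+1) ≠ 0 := by positivity
  have key : (((n-1).choose i : ℚ) + ((n-1).choose (i+1) : ℚ)) *
        ((2*n+2+i).choose (n+2+i) : ℚ) * (2*(n:ℚ)+1)
      = ((n-1).choose i : ℚ) * ((2*n+1+i).choose (n+1+i) : ℚ) * (2*(n:ℚ)+2+i)
        + ((n-1).choose (i+1) : ℚ) * ((2*n+2+i).choose (n+2+i) : ℚ) * (2*(n:ℚ)+2+i) := by
    linear_combination (-((n-1).choose i : ℚ)) * e1 - ((2*n+2+i).choose (n+2+i) : ℚ) * e2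
  rw [e3]
  field_simp
  linear_combination key

theorem stmt_3 (n i : ℕ) (hn : 1 ≤ n) (hi : i ≤ n - 1) :
    ∑ j ∈ Finset.range (i + 1),
      (-1 : ℚ) ^ (i - j) * (n.choose j : ℚ) * ((2 * n + 1 + j).choose (n + 1 + j) : ℚ) /
        (2 * n + 1 + j)
      = 1 / (2 * n + 1) * ((n - 1).choose i : ℚ) *
          ((2 * n + 1 + i).choose (n + 1 + i) : ℚ) := by
  induction i with
  | zero =>
      simp [Nat.choose_zero_right]
      ring
  | succ i ih =>
      have hi' : i ≤ n - 1 := by omega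
      have ihv := ih hi'
      rw [Finset.sum_range_succ]
      have hneg : ∑ j ∈ Finset.range (i + 1),
          (-1 : ℚ) ^ (i + 1 - j) * (n.choose j : ℚ) * ((2 * n + 1 + j).choose (n + 1 + j) : ℚ) /
            (2 * n + 1 + j)
          = -∑ j ∈ Finset.range (i + 1),
          (-1 : ℚ) ^ (i - j) * (n.choose j : ℚ) * ((2 * n + 1 + j).choose (n + 1 + j) : ℚ) /
            (2 * n + 1 + j) := by
        rw [← Finset.sum_neg_distrib]
        refine Finset.sum_congr rfl fun j hj => ?_
        have hj' : j ≤ i := by simpa [Nat.lt_succ_iff] using hj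
        have : i + 1 - j = (i - j) + 1 := by omega
        rw [this, pow_succ]
        ring
      rw [hneg, ihv]
      have hs := step_3 n i hn hi
      have harith1 : 2 * n + 1 + (i + 1) = 2 * n + 2 + i := by omega
      have harith2 : n + 1 + (i + 1) = n + 2 + i := by omega
      rw [harith1, harith2]
      simp only [Nat.sub_self, pow_zero, one_mul]
      push_cast at hs ⊢
      ring_nf at hs ⊢
      linarith [hs]
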